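/- Let {y_k, w_k} be the sequences generated by the GFDPG method. Then for any k ≥ 1 and any L′ > 0 satisfying the descent condition at y_k, the iterates are bounded: max{ ‖p_{L′}(y_k)‖, ‖y_k‖, ‖w_k‖ } ≤ ‖y_0 − y_*‖ + ‖y_*‖. -/

import Mathlib

open scoped RealInnerProductSpace


lemma grad_ineq {V : Type*} [NormedAddCommGroup V] [InnerProductSpace ℝ V]
    [CompleteSpace V]
    (F : V → ℝ) (hF : ConvexOn ℝ Set.univ F) (F' : V → V)
    (hF' : ∀ y, HasGradientAt F (F' y) y) (w x : V) :
    F w + ⟪x - w, F' w⟫ ≤ F x := by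
  have hline : HasDerivAt (fun s : ℝ => w + s • (x - w)) (x - w) 0 := by
    simpa using ((hasDerivAt_id (0:ℝ)).smul_const (x - w)).const_add w
  have hcomp : HasDerivAt (fun s : ℝ => F (w + s • (x - w))) ⟪x - w, F' w⟫ 0 := by
    have h1 := (hF' w).hasFDerivAt
    rw [show w = w + (0:ℝ) • (x - w) by simp] at h1
    have h2 := h1.comp_hasDerivAt (0:ℝ) hline
    exact h2.congr_deriv (by simp [real_inner_comm])
  have hslope : Filter.Tendsto (slope (fun s : ℝ => F (w + s • (x - w))) 0)
      (nhdsWithin 0 {(0:ℝ)}ᶜ) (nhds ⟪x - w, F' w⟫) :=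
    hasDerivAt_iff_tendsto_slope.mp hcomp
  have hsub : Set.Ioi (0:ℝ) ⊆ {(0:ℝ)}ᶜ := by
    intro s hs
    simp only [Set.mem_compl_iff, Set.mem_singleton_iff]
    exact ne_of_gt hs
  have hslope' := hslope.mono_left (nhdsWithin_mono 0 hsub)
  have hub : ∀ᶠ s in nhdsWithin (0:ℝ) (Set.Ioi 0),
      slope (fun s : ℝ => F (w + s • (x - w))) 0 s ≤ F x - F w := by
    filter_upwards [Ioo_mem_nhdsGT_of_mem (by norm_num : (0:ℝ) ∈ Set.Ico 0 1)] with s hs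
    have hs0 : 0 < s := hs.1
    have hs1 : s < 1 := hs.2
    have hcvx := hF.2 (Set.mem_univ w) (Set.mem_univ x) (by linarith : (0:ℝ) ≤ 1 - s)
      (le_of_lt hs0) (by ring)
    have heq : (1 - s) • w + s • x = w + s • (x - w) := by module
    rw [heq, smul_eq_mul, smul_eq_mul] at hcvx
    rw [slope_def_field]
    simp only [zero_smul, add_zero, sub_zero]
    rw [div_le_iff₀ hs0]
    nlinarith [hcvx]
  have := le_of_tendsto hslope' hub
  linarith


lemma norm_combo {V : Type*} [NormedAddCommGroup V] [InnerProductSpace ℝ V]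
    (l : ℝ) (u v : V) :
    ‖u + l • (v - u)‖^2 = (1-l)*‖u‖^2 + l*‖v‖^2 - l*(1-l)*‖v - u‖^2 := by
  simp only [← real_inner_self_eq_norm_sq]
  simp only [inner_add_add_self, inner_sub_sub_self, real_inner_smul_left,
    real_inner_smul_right, inner_sub_left, inner_sub_right]
  ring_nf

lemma key_lemma {V : Type*} [NormedAddCommGroup V] [InnerProductSpace ℝ V]
    [CompleteSpace V]
    (F G : V → ℝ) (hF : ConvexOn ℝ Set.univ F) (hG : ConvexOn ℝ Set.univ G)
    (F' : V → V) (hF' : ∀ y, HasGradientAt F (F' y) y)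
    (L : ℝ) (hL : 0 < L) (w z : V)
    (hmin : IsMinOn (fun y => F w + ⟪y - w, F' w⟫ + L / 2 * ‖y - w‖^2 + G y) Set.univ z)
    (hdesc : F z + G z ≤ F w + ⟪z - w, F' w⟫ + L / 2 * ‖z - w‖^2 + G z)
    (x : V) :
    F z + G z + L/2 * ‖z - x‖^2 ≤ F x + G x + L/2 * ‖w - x‖^2 := by
  -- strong minimality
  have hstrong : (F w + ⟪z - w, F' w⟫ + L / 2 * ‖z - w‖^2 + G z) + L/2 * ‖x - z‖^2
      ≤ F w + ⟪x - w, F' w⟫ + L / 2 * ‖x - w‖^2 + G x := by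
    have hstep : ∀ l : ℝ, 0 < l → l < 1 →
        (F w + ⟪z - w, F' w⟫ + L / 2 * ‖z - w‖^2 + G z)
          ≤ (F w + ⟪x - w, F' w⟫ + L / 2 * ‖x - w‖^2 + G x) - L/2 * (1-l) * ‖x - z‖^2 := by
      intro l hl0 hl1
      have hyl : F w + ⟪z - w, F' w⟫ + L / 2 * ‖z - w‖^2 + G z
          ≤ F w + ⟪(z + l • (x - z)) - w, F' w⟫ + L / 2 * ‖(z + l • (x - z)) - w‖^2
            + G (z + l • (x - z)) :=
        isMinOn_iff.mp hmin (z + l • (x - z)) (Set.mem_univ _)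
      have hinner : ⟪(z + l • (x - z)) - w, F' w⟫
          = (1-l) * ⟪z - w, F' w⟫ + l * ⟪x - w, F' w⟫ := by
        rw [show (z + l • (x - z)) - w = (1-l) • (z - w) + l • (x - w) by module,
          inner_add_left, real_inner_smul_left, real_inner_smul_left]
      have hnorm : ‖(z + l • (x - z)) - w‖^2
          = (1-l)*‖z - w‖^2 + l*‖x - w‖^2 - l*(1-l)*‖x - z‖^2 := by
        rw [show (z + l • (x - z)) - w = (z - w) + l • ((x - w) - (z - w)) by module,
          norm_combo l (z - w) (x - w), show (x - w) - (z - w) = x - z by module]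
      have hGc : G (z + l • (x - z)) ≤ (1-l) * G z + l * G x := by
        have hcvx := hG.2 (Set.mem_univ z) (Set.mem_univ x)
          (by linarith : (0:ℝ) ≤ 1 - l) (le_of_lt hl0) (by ring)
        rw [show (1-l) • z + l • x = z + l • (x - z) by module,
          smul_eq_mul, smul_eq_mul] at hcvx
        exact hcvx
      rw [hinner, hnorm] at hyl
      nlinarith [hyl, hGc]
    have hc : 0 ≤ L/2 * ‖x - z‖^2 := by positivity
    rw [← sub_nonneg]
    by_contra hneg
    push_neg at hneg
    rw [sub_neg] at hneg
    set ε : ℝ := (F w + ⟪z - w, F' w⟫ + L / 2 * ‖z - w‖^2 + G z) + L/2 * ‖x - z‖^2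
      - (F w + ⟪x - w, F' w⟫ + L / 2 * ‖x - w‖^2 + G x) with hε
    have hεpos : 0 < ε := by simp only [hε]; linarith
    set l : ℝ := min (1/2) (ε / (L/2 * ‖x - z‖^2 + 1)) with hldef
    have hl0 : 0 < l := lt_min (by norm_num) (by positivity)
    have hl1 : l < 1 := lt_of_le_of_lt (min_le_left _ _) (by norm_num)
    have hle : l ≤ ε / (L/2 * ‖x - z‖^2 + 1) := min_le_right _ _
    have hst := hstep l hl0 hl1
    have hkey : l * (L/2 * ‖x - z‖^2) < ε := by
      have h1 : l * (L/2 * ‖x - z‖^2) ≤ (ε / (L/2 * ‖x - z‖^2 + 1)) * (L/2 * ‖x - z‖^2) :=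
        mul_le_mul_of_nonneg_right hle hc
      have h2 : (ε / (L/2 * ‖x - z‖^2 + 1)) * (L/2 * ‖x - z‖^2) < ε := by
        rw [div_mul_eq_mul_div, div_lt_iff₀ (by linarith)]
        nlinarith
      linarith
    rw [hε] at hkey
    nlinarith [hst]
  have hgi : F w + ⟪x - w, F' w⟫ ≤ F x := grad_ineq F hF F' hF' w x
  have h1 : ‖x - z‖ = ‖z - x‖ := norm_sub_rev _ _
  have h2 : ‖x - w‖ = ‖w - x‖ := norm_sub_rev _ _
  rw [h1, h2] at hstrong
  linarith [hstrong, hgi, hdesc]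


lemma energy_identity {V : Type*} [NormedAddCommGroup V] [InnerProductSpace ℝ V]
    (s τ : ℝ) (hτ : τ ≠ 0) (a b w z Z : V)
    (hZ : τ • Z = s • w - (s - τ) • a) :
    (s-τ) * (‖w-a‖^2 - ‖z-a‖^2) + τ * (‖w-b‖^2 - ‖z-b‖^2)
      = ‖Z-b‖^2 - ‖(Z + τ•(z-w))-b‖^2 + (τ^2-s) * ‖z-w‖^2 := by
  have hZ' : Z = (s/τ) • w - ((s-τ)/τ) • a := by
    have := congrArg (fun v => τ⁻¹ • v) hZ
    simpa [smul_smul, smul_sub, inv_smul_smul₀ hτ, div_eq_inv_mul, mul_comm] using this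
  subst hZ'
  simp only [← real_inner_self_eq_norm_sq]
  simp only [inner_sub_sub_self, inner_sub_left, inner_sub_right, inner_add_left,
    inner_add_right, real_inner_smul_left, real_inner_smul_right]
  rw [real_inner_comm a w, real_inner_comm a z, real_inner_comm a b, real_inner_comm w z,
    real_inner_comm w b, real_inner_comm z b]
  field_simp
  ring

lemma sq_le_imp (a b : ℝ) (ha : 0 ≤ a) (hb : 0 ≤ b) (h : a^2 ≤ b^2) : a ≤ b := by
  nlinarith

lemma fejer {V : Type*} [NormedAddCommGroup V] [InnerProductSpace ℝ V]
    [CompleteSpace V]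
    (F G : V → ℝ) (hF : ConvexOn ℝ Set.univ F) (hG : ConvexOn ℝ Set.univ G)
    (F' : V → V) (hF' : ∀ y, HasGradientAt F (F' y) y)
    (ystar : V) (hystar : ∀ y, F ystar + G ystar ≤ F y + G y)
    (L : ℝ) (hL : 0 < L) (w z : V)
    (hmin : IsMinOn (fun y => F w + ⟪y - w, F' w⟫ + L / 2 * ‖y - w‖^2 + G y) Set.univ z)
    (hdesc : F z + G z ≤ F w + ⟪z - w, F' w⟫ + L / 2 * ‖z - w‖^2 + G z) :
    ‖z - ystar‖ ≤ ‖w - ystar‖ := by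
  have hkey := key_lemma F G hF hG F' hF' L hL w z hmin hdesc ystar
  have hopt := hystar z
  have hsq : ‖z - ystar‖^2 ≤ ‖w - ystar‖^2 := by
    have hL2 : 0 < L/2 := by linarith
    nlinarith [hkey, hopt]
  exact sq_le_imp _ _ (norm_nonneg _) (norm_nonneg _) hsq

set_option maxHeartbeats 1000000 in
/-- For the GFDPG sequences, for any `k ≥ 1` and any `L′ > 0` satisfying the
descent condition at `y_k`, the iterates are bounded:
`max{ ‖p_{L′}(y_k)‖, ‖y_k‖, ‖w_k‖ } ≤ ‖y_0 − y_*‖ + ‖y_*‖`. -/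
theorem gfdpg_iterates_bounded
    {V : Type*} [NormedAddCommGroup V] [InnerProductSpace ℝ V] [FiniteDimensional ℝ V]
    (F G : V → ℝ) (LF : ℝ)
    (hF : ConvexOn ℝ Set.univ F) (hG : ConvexOn ℝ Set.univ G)
    (F' : V → V) (hF' : ∀ y, HasGradientAt F (F' y) y)
    (hLip : ∀ y w : V, ‖F' y - F' w‖ ≤ LF * ‖y - w‖)
    -- q̃ := F + G attains its minimum at y_*
    (ystar : V) (hystar : ∀ y, F ystar + G ystar ≤ F y + G y)
    -- p_L(w) : the unique minimizer over y of Q_L(y, w)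
    (P : ℝ → V → V)
    (hP : ∀ L, 0 < L → ∀ w, IsMinOn
      (fun y => F w + ⟪y - w, F' w⟫ + L / 2 * ‖y - w‖^2 + G y) Set.univ (P L w))
    -- the GFDPG method
    (y w : ℕ → V) (t T Lk : ℕ → ℝ)
    (hw0 : w 0 = y 0) (hL0 : 0 < Lk 0)
    (ht0 : t 0 = T 0) (ht0pos : 0 < t 0) (ht0le : t 0 ≤ 1)
    (hT : ∀ k : ℕ, T k = ∑ i ∈ Finset.range (k+1), t i)
    (hLmono : ∀ k : ℕ, Lk k ≤ Lk (k+1))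
    (hdesc : ∀ k : ℕ,
      F (P (Lk (k+1)) (w k)) + G (P (Lk (k+1)) (w k)) ≤
        F (w k) + ⟪P (Lk (k+1)) (w k) - w k, F' (w k)⟫
          + Lk (k+1) / 2 * ‖P (Lk (k+1)) (w k) - w k‖^2 + G (P (Lk (k+1)) (w k)))
    (hy : ∀ k : ℕ, y (k+1) = P (Lk (k+1)) (w k))
    (htpos : ∀ k : ℕ, 0 < t (k+1)) (htsq : ∀ k : ℕ, t (k+1) ^ 2 ≤ T (k+1))
    (hw : ∀ k : ℕ, w (k+1) = y (k+1)
      + (((T k - t k) * t (k+1)) / (t k * T (k+1))) • (y (k+1) - y k)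
      + (((t k ^ 2 - T k) * t (k+1)) / (t k * T (k+1))) • (y (k+1) - w k))
    (k : ℕ) (hk : 1 ≤ k)
    -- L′ > 0 satisfying the descent condition at y_k
    (L' : ℝ) (hL' : 0 < L')
    (hdesc' : F (P L' (y k)) + G (P L' (y k)) ≤
      F (y k) + ⟪P L' (y k) - y k, F' (y k)⟫
        + L' / 2 * ‖P L' (y k) - y k‖^2 + G (P L' (y k))) :
    max (max ‖P L' (y k)‖ ‖y k‖) ‖w k‖ ≤ ‖y 0 - ystar‖ + ‖ystar‖ := by
  have tpos : ∀ n, 0 < t n := by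
    intro n
    cases n with
    | zero => exact ht0pos
    | succ m => exact htpos m
  have Tpos : ∀ n, 0 < T n := by
    intro n
    rw [hT]
    exact Finset.sum_pos (fun i _ => tpos i) ⟨0, Finset.mem_range.mpr (Nat.succ_pos n)⟩
  have hTrec : ∀ n, T (n+1) = T n + t (n+1) := by
    intro n
    rw [hT, hT, Finset.sum_range_succ]
  have hTt : ∀ n, 0 ≤ T n - t n := by
    intro n
    rw [hT, Finset.sum_range_succ]
    have := Finset.sum_nonneg (fun i (_ : i ∈ Finset.range n) => (tpos i).le)
    linarith
  have htsq' : ∀ n, t n ^ 2 ≤ T n := by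
    intro n
    cases n with
    | zero => rw [← ht0]; nlinarith
    | succ m => exact htsq m
  have hLpos : ∀ n, 0 < Lk n := by
    intro n
    induction n with
    | zero => exact hL0
    | succ m ih => exact lt_of_lt_of_le ih (hLmono m)
  -- the auxiliary sequence Z
  let Z : ℕ → V := fun n => Nat.rec (y 0) (fun m Zm => Zm + t m • (y (m+1) - w m)) n
  have hZ0 : Z 0 = y 0 := rfl
  have hZsucc : ∀ n, Z (n+1) = Z n + t n • (y (n+1) - w n) := fun n => rfl
  -- invariant
  have hZw : ∀ n, t n • Z n = T n • w n - (T n - t n) • y n := by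
    intro n
    induction n with
    | zero => rw [hZ0, hw0, ← ht0]; module
    | succ n ih =>
      have htn := (tpos n).ne'
      have hTn := (Tpos n).ne'
      have hTn1 := (Tpos (n+1)).ne'
      have hTn1' : T n + t (n+1) ≠ 0 := by rw [← hTrec n]; exact hTn1
      have hwn : w n = (t n / T n) • Z n + ((T n - t n)/T n) • y n := by
        have h := congrArg (fun v => (T n)⁻¹ • v) ih
        simp only [smul_sub, smul_smul] at h
        rw [inv_mul_cancel₀ hTn, one_smul] at h
        rw [div_eq_inv_mul, div_eq_inv_mul, h]
        module
      rw [hZsucc, hw n, hwn, hTrec n]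
      match_scalars <;> field_simp <;> ring
  -- energy inequality
  have hq := fun v => hystar v
  have hE : ∀ n, 2 * (T n - t n) * (F (y n) + G (y n) - (F ystar + G ystar))
      + Lk n * ‖Z n - ystar‖^2 ≤ Lk n * ‖y 0 - ystar‖^2 := by
    intro n
    induction n with
    | zero =>
      rw [hZ0]
      have h0 : T 0 - t 0 = 0 := by rw [ht0]; ring
      rw [h0]
      ring_nf
      exact le_rfl
    | succ n ih =>
      have hL1 : 0 < Lk (n+1) := hLpos (n+1)
      have hmin' : IsMinOn (fun v => F (w n) + ⟪v - w n, F' (w n)⟫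
          + Lk (n+1) / 2 * ‖v - w n‖^2 + G v) Set.univ (y (n+1)) := by
        rw [hy n]; exact hP _ hL1 (w n)
      have hdesc'' : F (y (n+1)) + G (y (n+1)) ≤ F (w n) + ⟪y (n+1) - w n, F' (w n)⟫
          + Lk (n+1) / 2 * ‖y (n+1) - w n‖^2 + G (y (n+1)) := by
        rw [hy n]; exact hdesc n
      have key := key_lemma F G hF hG F' hF' (Lk (n+1)) hL1 (w n) (y (n+1)) hmin' hdesc''
      have k1 := key (y n)
      have k2 := key ystar
      have hid := energy_identity (T n) (t n) (tpos n).ne' (y n) ystar (w n) (y (n+1))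
        (Z n) (hZw n)
      have h1 := mul_le_mul_of_nonneg_left k1 (hTt n)
      have h2 := mul_le_mul_of_nonneg_left k2 (le_of_lt (tpos n))
      have hid2 := congrArg (fun r => Lk (n+1)/2 * r) hid
      beta_reduce at hid2
      have h3 : 0 ≤ Lk (n+1)/2 * ((T n - t n^2) * ‖y (n+1) - w n‖^2) := by
        have := htsq' n
        have h4 : 0 ≤ T n - t n^2 := by linarith
        positivity
      have hstep : 2 * T n * (F (y (n+1)) + G (y (n+1)))
            + Lk (n+1) * ‖(Z n + t n • (y (n+1) - w n)) - ystar‖^2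
          ≤ 2 * (T n - t n) * (F (y n) + G (y n)) + 2 * t n * (F ystar + G ystar)
            + Lk (n+1) * ‖Z n - ystar‖^2 := by
        linarith [h1, h2, hid2, h3]
      have hZn2 : ‖Z n - ystar‖^2 ≤ ‖y 0 - ystar‖^2 := by
        have hd : 0 ≤ 2 * (T n - t n) * (F (y n) + G (y n) - (F ystar + G ystar)) := by
          have := hq (y n)
          have := hTt n
          nlinarith
        have hLn := hLpos n
        nlinarith [ih]
      have e1 : T (n+1) - t (n+1) = T n := by rw [hTrec n]; ring
      rw [e1, hZsucc n]
      have hmono := hLmono n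
      have hd1 : 0 ≤ F (y (n+1)) + G (y (n+1)) - (F ystar + G ystar) := by
        have := hq (y (n+1)); linarith
      have hdn : 0 ≤ F (y n) + G (y n) - (F ystar + G ystar) := by
        have := hq (y n); linarith
      nlinarith [hstep, ih, hZn2, mul_nonneg (sub_nonneg.mpr hmono)
        (sub_nonneg.mpr hZn2), mul_nonneg (hTt n) hdn]
  -- bounds on Z
  have hZb : ∀ n, ‖Z n - ystar‖ ≤ ‖y 0 - ystar‖ := by
    intro n
    apply sq_le_imp _ _ (norm_nonneg _) (norm_nonneg _)
    have hLn := hLpos n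
    have hd : 0 ≤ 2 * (T n - t n) * (F (y n) + G (y n) - (F ystar + G ystar)) := by
      have := hq (y n)
      have := hTt n
      nlinarith
    nlinarith [hE n]
  -- bounds on y and w
  have hyw : ∀ n, ‖y n - ystar‖ ≤ ‖y 0 - ystar‖ ∧ ‖w n - ystar‖ ≤ ‖y 0 - ystar‖ := by
    intro n
    induction n with
    | zero => exact ⟨le_refl _, by rw [hw0]⟩
    | succ n ih =>
      have hL1 : 0 < Lk (n+1) := hLpos (n+1)
      have hmin' : IsMinOn (fun v => F (w n) + ⟪v - w n, F' (w n)⟫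
          + Lk (n+1) / 2 * ‖v - w n‖^2 + G v) Set.univ (y (n+1)) := by
        rw [hy n]; exact hP _ hL1 (w n)
      have hdesc'' : F (y (n+1)) + G (y (n+1)) ≤ F (w n) + ⟪y (n+1) - w n, F' (w n)⟫
          + Lk (n+1) / 2 * ‖y (n+1) - w n‖^2 + G (y (n+1)) := by
        rw [hy n]; exact hdesc n
      have hfy : ‖y (n+1) - ystar‖ ≤ ‖w n - ystar‖ :=
        fejer F G hF hG F' hF' ystar hystar (Lk (n+1)) hL1 (w n) (y (n+1)) hmin' hdesc''
      have hy1 : ‖y (n+1) - ystar‖ ≤ ‖y 0 - ystar‖ := le_trans hfy ih.2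
      constructor
      · exact hy1
      · -- w (n+1) is a convex combination of y (n+1) and Z (n+1)
        have h2 : T (n+1) • (w (n+1) - ystar)
            = (T (n+1) - t (n+1)) • (y (n+1) - ystar) + t (n+1) • (Z (n+1) - ystar) := by
          have h := hZw (n+1)
          simp only [smul_sub]
          rw [h]
          module
        have hnorm : T (n+1) * ‖w (n+1) - ystar‖ ≤ T (n+1) * ‖y 0 - ystar‖ := by
          calc T (n+1) * ‖w (n+1) - ystar‖ = ‖T (n+1) • (w (n+1) - ystar)‖ := by
                rw [norm_smul, Real.norm_eq_abs, abs_of_pos (Tpos (n+1))]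
            _ = ‖(T (n+1) - t (n+1)) • (y (n+1) - ystar) + t (n+1) • (Z (n+1) - ystar)‖ := by
                rw [h2]
            _ ≤ ‖(T (n+1) - t (n+1)) • (y (n+1) - ystar)‖ + ‖t (n+1) • (Z (n+1) - ystar)‖ :=
                norm_add_le _ _
            _ = (T (n+1) - t (n+1)) * ‖y (n+1) - ystar‖ + t (n+1) * ‖Z (n+1) - ystar‖ := by
                rw [norm_smul, norm_smul, Real.norm_eq_abs, Real.norm_eq_abs,
                  abs_of_nonneg (hTt (n+1)), abs_of_pos (tpos (n+1))]
            _ ≤ (T (n+1) - t (n+1)) * ‖y 0 - ystar‖ + t (n+1) * ‖y 0 - ystar‖ := by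
                apply add_le_add
                · exact mul_le_mul_of_nonneg_left hy1 (hTt (n+1))
                · exact mul_le_mul_of_nonneg_left (hZb (n+1)) (le_of_lt (tpos (n+1)))
            _ = T (n+1) * ‖y 0 - ystar‖ := by ring
        exact le_of_mul_le_mul_left hnorm (Tpos (n+1))
  -- conclusion
  have hp : ‖P L' (y k) - ystar‖ ≤ ‖y k - ystar‖ :=
    fejer F G hF hG F' hF' ystar hystar L' hL' (y k) (P L' (y k))
      (hP L' hL' (y k)) hdesc'
  have htr : ∀ v : V, ‖v‖ ≤ ‖v - ystar‖ + ‖ystar‖ := by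
    intro v
    calc ‖v‖ = ‖(v - ystar) + ystar‖ := by rw [sub_add_cancel]
      _ ≤ ‖v - ystar‖ + ‖ystar‖ := norm_add_le _ _
  have hyk := (hyw k).1
  have hwk := (hyw k).2
  refine max_le (max_le ?_ ?_) ?_
  · exact le_trans (htr _) (by linarith [le_trans hp hyk])
  · exact le_trans (htr _) (by linarith)
  · exact le_trans (htr _) (by linarith)
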